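/- Suppose the user at position j of the equilibrium profile s^e deviates to a time s′ whose position o′ in the deviated profile satisfies j < o′ < P (i.e., the deviator delays their departure order but does not become the last to depart), and let s_f denote the departure time of the user occupying position o′ − 1 of the deviated profile. Then the deviator's new trip cost satisfies C′ ≥ ρ + (s_f − s′); consequently the cost improvement satisfies ρ − C′ ≤ s′ − s_f < m(1+γ)/μ. -/

import Mathlib

/-- Schedule delay cost function `V(d) = β·max(−d,0) + γ·max(d,0)`. -/
noncomputable def sdc (β γ d : ℝ) : ℝ := β * max (-d) 0 + γ * max d 0

/-- Destination arrival times: `d 0 = s 0`, `d (k+1) = max (d k + m/μ) (s (k+1))`. -/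
noncomputable def arr (m μ : ℝ) (s : ℕ → ℝ) : ℕ → ℝ
  | 0 => s 0
  | k + 1 => max (arr m μ s k + m / μ) (s (k + 1))

/-- Trip cost of the `k`-th departing user. -/
noncomputable def cost (β γ m μ : ℝ) (s : ℕ → ℝ) (k : ℕ) : ℝ :=
  (arr m μ s k - s k) + sdc β γ (arr m μ s k)

/-- A time profile: strictly increasing departure times (0-indexed, users `0,…,P-1`). -/
def IsProfile (P : ℕ) (s : ℕ → ℝ) : Prop := ∀ i, i + 1 < P → s i < s (i + 1)

/-- Equilibrium departure time of the first user. -/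
noncomputable def tminus (P : ℕ) (m μ β γ : ℝ) : ℝ :=
  -(m * ((P : ℝ) - 1) / μ) * (γ / (β + γ))

/-- Equilibrium departure time of the last user. -/
noncomputable def tplus (P : ℕ) (m μ β γ : ℝ) : ℝ :=
  tminus P m μ β γ + m * ((P : ℝ) - 1) / μ

/-- Equilibrium trip cost. -/
noncomputable def rho (P : ℕ) (m μ β γ : ℝ) : ℝ :=
  (m * ((P : ℝ) - 1) / μ) * (β * γ / (β + γ))

/-- The equilibrium profile `s^e` (0-indexed: index `k` is the `(k+1)`-st departing user). -/
noncomputable def se (P : ℕ) (m μ β γ : ℝ) (k : ℕ) : ℝ :=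
  if (k : ℤ) ≤ ⌊γ * ((P : ℝ) - 1) / (β + γ)⌋ then
    tminus P m μ β γ + (m * (1 - β) / μ) * (k : ℝ)
  else
    tminus P m μ β γ + (m * (1 + γ) / μ) * (k : ℝ) - m * γ * ((P : ℝ) - 1) / μ

section Aux

variable {P : ℕ} {m μ β γ : ℝ}

/-- se is strictly monotone. -/
lemma se_strictMono (hP : 2 ≤ P) (hm : 0 < m) (hμ : 0 < μ) (hβ : 0 < β)
    (hβ1 : β < 1) (hγ : 0 < γ) : StrictMono (se P m μ β γ) := by
  have hbg : 0 < β + γ := by linarith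
  set X : ℝ := γ * ((P : ℝ) - 1) / (β + γ) with hX
  have hP1 : (1:ℝ) ≤ (P:ℝ) - 1 := by
    have : (2:ℝ) ≤ (P:ℝ) := by exact_mod_cast hP
    linarith
  have hX0 : 0 ≤ X := div_nonneg (mul_nonneg hγ.le (by linarith)) hbg.le
  have hfl : (⌊X⌋ : ℝ) ≤ X := Int.floor_le X
  have hfl2 : X < (⌊X⌋ : ℝ) + 1 := Int.lt_floor_add_one X
  have hgp : γ * ((P : ℝ) - 1) = (β + γ) * X := by rw [hX]; field_simp
  intro a b hab
  have habr : (a : ℝ) < (b : ℝ) := by exact_mod_cast hab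
  have hmm : 0 < m / μ := by positivity
  simp only [se]
  rw [← hX]
  split_ifs with h1 h2 h2
  · have : m * (1 - β) / μ * (a:ℝ) < m * (1 - β) / μ * (b:ℝ) := by
      apply mul_lt_mul_of_pos_left habr
      exact div_pos (mul_pos hm (by linarith)) hμ
    linarith
  · -- a ≤ F < b
    have haX : (a : ℝ) ≤ X := by
      calc (a:ℝ) = ((a:ℤ):ℝ) := by push_cast; ring
      _ ≤ (⌊X⌋:ℝ) := by exact_mod_cast h1
      _ ≤ X := hfl
    have hbX : X < (b : ℝ) := by
      have h5 : (⌊X⌋:ℤ) + 1 ≤ (b:ℤ) := by omega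
      have : (⌊X⌋:ℝ) + 1 ≤ (b:ℝ) := by exact_mod_cast h5
      linarith
    have h3 : 0 < (m/μ) * ((1+γ) * ((b:ℝ) - X)) := by
      apply mul_pos hmm; apply mul_pos (by linarith) (by linarith)
    have h4 : 0 ≤ (m/μ) * ((1-β) * (X - (a:ℝ))) := by
      apply mul_nonneg hmm.le; apply mul_nonneg (by linarith) (by linarith)
    have e1 : m * (1+γ) / μ * (b:ℝ) - (β+γ)*X * m / μ - m * (1-β)/μ * (a:ℝ)
        = (m/μ) * ((1+γ) * ((b:ℝ) - X)) + (m/μ) * ((1-β) * (X - (a:ℝ))) := by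
      field_simp; ring
    have : m * γ * ((P:ℝ)-1) / μ = (β+γ)*X * m / μ := by rw [← hgp]; ring
    rw [this]
    linarith
  · exfalso; omega
  · have : m * (1 + γ) / μ * (a:ℝ) < m * (1 + γ) / μ * (b:ℝ) := by
      apply mul_lt_mul_of_pos_left habr
      exact div_pos (mul_pos hm (by linarith)) hμ
    linarith

/-- Consecutive gap bound. -/
lemma se_gap (hP : 2 ≤ P) (hm : 0 < m) (hμ : 0 < μ) (hβ : 0 < β)
    (hβ1 : β < 1) (hγ : 0 < γ) (k : ℕ) :
    se P m μ β γ (k+1) ≤ se P m μ β γ k + m * (1 + γ) / μ := by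
  have hbg : 0 < β + γ := by linarith
  set X : ℝ := γ * ((P : ℝ) - 1) / (β + γ) with hX
  have hfl : (⌊X⌋ : ℝ) ≤ X := Int.floor_le X
  have hgp : γ * ((P : ℝ) - 1) = (β + γ) * X := by rw [hX]; field_simp
  have hmm : 0 < m / μ := by positivity
  simp only [se]
  rw [← hX]
  split_ifs with h1 h2 h2
  · push_cast
    have : 0 ≤ m * (β + γ) / μ := by positivity
    have e : m * (1+γ)/μ - m*(1-β)/μ = m * (β+γ)/μ := by ring
    nlinarith [mul_nonneg hmm.le (Nat.cast_nonneg (α := ℝ) k)]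
  · exfalso; omega
  · -- k ≤ F < k+1
    have hkX : (k : ℝ) ≤ X := by
      calc (k:ℝ) = ((k:ℤ):ℝ) := by push_cast; ring
      _ ≤ (⌊X⌋:ℝ) := by exact_mod_cast h2
      _ ≤ X := hfl
    have e : m * γ * ((P:ℝ)-1) / μ = (β+γ)*X * m / μ := by rw [← hgp]; ring
    rw [e]
    push_cast
    have h3 : 0 ≤ (m/μ) * ((β+γ) * (X - (k:ℝ))) :=
      mul_nonneg hmm.le (mul_nonneg hbg.le (by linarith))
    have key : m * (1+γ)/μ * ((k:ℝ)+1) - (β+γ)*X*m/μ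
        - (m*(1-β)/μ*(k:ℝ) + m*(1+γ)/μ) = -((m/μ) * ((β+γ) * (X - (k:ℝ)))) := by
      field_simp; ring
    linarith
  · push_cast; ring_nf; nlinarith [hmm]

/-- Equilibrium arrival/cost identity:  a_k + V(a_k) = ρ + se k. -/
lemma se_cost_id (hP : 2 ≤ P) (hm : 0 < m) (hμ : 0 < μ) (hβ : 0 < β)
    (hβ1 : β < 1) (hγ : 0 < γ) (k : ℕ) :
    (tminus P m μ β γ + (m/μ) * (k:ℝ)) + sdc β γ (tminus P m μ β γ + (m/μ) * (k:ℝ))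
      = rho P m μ β γ + se P m μ β γ k := by
  have hbg : 0 < β + γ := by linarith
  set X : ℝ := γ * ((P : ℝ) - 1) / (β + γ) with hX
  have hfl : (⌊X⌋ : ℝ) ≤ X := Int.floor_le X
  have hfl2 : X < (⌊X⌋ : ℝ) + 1 := Int.lt_floor_add_one X
  have hgp : γ * ((P : ℝ) - 1) = (β + γ) * X := by rw [hX]; field_simp
  have hmm : 0 < m / μ := by positivity
  have htm : tminus P m μ β γ = -((m/μ) * X) := by
    simp only [tminus]; rw [hX]; field_simp
  have hrho : rho P m μ β γ = β * ((m/μ) * X) := by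
    simp only [rho]; rw [hX]; field_simp
  set A : ℝ := tminus P m μ β γ + (m/μ) * (k:ℝ) with hA
  have hAe : A = (m/μ) * ((k:ℝ) - X) := by rw [hA, htm]; ring
  simp only [se]
  rw [← hX]
  split_ifs with h1
  · -- early: A ≤ 0
    have hkX : (k : ℝ) ≤ X := by
      calc (k:ℝ) = ((k:ℤ):ℝ) := by push_cast; ring
      _ ≤ (⌊X⌋:ℝ) := by exact_mod_cast h1
      _ ≤ X := hfl
    have hA0 : A ≤ 0 := by
      rw [hAe]; exact mul_nonpos_of_nonneg_of_nonpos hmm.le (by linarith)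
    have : sdc β γ A = -(β * A) := by
      simp only [sdc, max_eq_right hA0, max_eq_left (by linarith : (0:ℝ) ≤ -A)]
      ring
    rw [this, hAe, htm, hrho]
    field_simp
    ring
  · -- late: A ≥ 0
    have hkX : X < (k : ℝ) := by
      have h5 : (⌊X⌋:ℤ) + 1 ≤ (k:ℤ) := by omega
      have : (⌊X⌋:ℝ) + 1 ≤ (k:ℝ) := by exact_mod_cast h5
      linarith
    have hA0 : 0 ≤ A := by
      rw [hAe]; exact mul_nonneg hmm.le (by linarith)
    have : sdc β γ A = γ * A := by
      simp only [sdc, max_eq_left hA0, max_eq_right (by linarith : -A ≤ (0:ℝ))]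
      ring
    rw [this, hAe, htm]
    have e : m * γ * ((P:ℝ)-1) / μ = (β+γ)*X * m / μ := by rw [← hgp]; ring
    rw [e, hrho]
    field_simp
    ring

/-- g(d) = d + V(d) is monotone when β < 1. -/
lemma g_mono (hβ : 0 < β) (hβ1 : β < 1) (hγ : 0 < γ) {a b : ℝ} (hab : a ≤ b) :
    a + sdc β γ a ≤ b + sdc β γ b := by
  simp only [sdc]
  rcases le_or_gt a 0 with ha | ha <;> rcases le_or_gt b 0 with hb | hb
  · rw [max_eq_right ha, max_eq_right hb, max_eq_left (by linarith : (0:ℝ) ≤ -a),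
      max_eq_left (by linarith : (0:ℝ) ≤ -b)]
    nlinarith
  · rw [max_eq_right ha, max_eq_left hb.le, max_eq_left (by linarith : (0:ℝ) ≤ -a),
      max_eq_right (by linarith : -b ≤ (0:ℝ))]
    nlinarith
  · linarith
  · rw [max_eq_left ha.le, max_eq_left hb.le, max_eq_right (by linarith : -a ≤ (0:ℝ)),
      max_eq_right (by linarith : -b ≤ (0:ℝ))]
    nlinarith

/-- Arrival lower bound. -/
lemma arr_lb (hm : 0 < m) (hμ : 0 < μ) (s : ℕ → ℝ) (k : ℕ) :
    s 0 + (m/μ) * (k:ℝ) ≤ arr m μ s k := by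
  induction k with
  | zero => simp [arr]
  | succ n ih =>
    have : arr m μ s n + m / μ ≤ arr m μ s (n+1) := le_max_left _ _
    push_cast
    linarith

end Aux

theorem deviation_delaying_bound (P : ℕ) (hP : 2 ≤ P) (m μ β γ : ℝ)
    (hm : 0 < m) (hm1 : m ≤ 1) (hμ : 0 < μ)
    (hβ : 0 < β) (hβ1 : β < 1) (hγ : 0 < γ)
    (j : ℕ) (hj : j < P) (s' : ℝ)
    (hs' : ∀ k, k < P → k ≠ j → s' ≠ se P m μ β γ k)
    (sd : ℕ → ℝ) (hsd : IsProfile P sd)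
    (hmult : Multiset.map sd (Finset.range P).val =
      s' ::ₘ (Multiset.map (se P m μ β γ) (Finset.range P).val).erase (se P m μ β γ j))
    (o' : ℕ) (hso' : sd o' = s')
    (ho1 : j < o') (ho2 : o' < P - 1) :
    rho P m μ β γ + (sd (o' - 1) - s') ≤ cost β γ m μ sd o' ∧
    rho P m μ β γ - cost β γ m μ sd o' ≤ s' - sd (o' - 1) ∧
    s' - sd (o' - 1) < m * (1 + γ) / μ := by
  classical
  set f := se P m μ β γ with hfdef
  have hsf : StrictMono f := se_strictMono hP hm hμ hβ hβ1 hγ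
  have ho'P : o' < P := by omega
  have ho'1P : o' + 1 < P := by omega
  -- sd is strictly monotone below P
  have hmono : ∀ a b : ℕ, a < b → b < P → sd a < sd b := by
    intro a b hab hbP
    induction b with
    | zero => omega
    | succ n ih =>
      rcases Nat.lt_succ_iff_lt_or_eq.1 hab with h | h
      · exact lt_trans (ih h (by omega)) (hsd n hbP)
      · subst h; exact hsd a hbP
  -- membership facts
  have hjm : f j ∈ Multiset.map f (Finset.range P).val :=
    Multiset.mem_map.2 ⟨j, by simpa using hj, rfl⟩
  set E : Multiset ℝ := (Multiset.map f (Finset.range P).val).erase (f j) with hE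
  have hconsE : f j ::ₘ E = Multiset.map f (Finset.range P).val := Multiset.cons_erase hjm
  -- counting
  set p : ℝ → Prop := fun x => x < s' with hp
  have hcard1 : (Multiset.filter p (Multiset.map sd (Finset.range P).val)).card = o' := by
    rw [Multiset.filter_map, Multiset.card_map]
    have hfe : (Finset.range P).filter (fun k => sd k < s') = Finset.range o' := by
      ext k
      simp only [Finset.mem_filter, Finset.mem_range]
      constructor
      · rintro ⟨hkP, hks⟩
        by_contra hk
        push_neg at hk
        rcases eq_or_lt_of_le hk with h | h
        · rw [← h, hso'] at hks; exact lt_irrefl _ hks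
        · have := hmono o' k h hkP
          rw [hso'] at this; linarith
      · intro hk
        refine ⟨by omega, ?_⟩
        have := hmono k o' hk ho'P
        rwa [hso'] at this
    have e : Multiset.filter (p ∘ sd) (Finset.range P).val
        = ((Finset.range P).filter (fun k => sd k < s')).val := by
      rw [Finset.filter_val]
      exact Multiset.filter_congr (fun x _ => Iff.rfl)
    rw [e, hfe]
    simp
  have hcardE : (Multiset.filter p E).card = o' := by
    have := hcard1
    rw [hmult, Multiset.filter_cons_of_neg _ (by simp [hp])] at this
    exact this
  -- the Finset of indices with f k < s'
  set Φ : Finset ℕ := (Finset.range P).filter (fun k => f k < s') with hΦ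
  have hΦcard : Φ.card = o' + (if f j < s' then 1 else 0) := by
    have h1 : (Multiset.filter p (Multiset.map f (Finset.range P).val)).card = Φ.card := by
      rw [Multiset.filter_map, Multiset.card_map]
      have e : Multiset.filter (p ∘ f) (Finset.range P).val = Φ.val := by
        rw [hΦ, Finset.filter_val]
        exact Multiset.filter_congr (fun x _ => Iff.rfl)
      rw [e]
      rfl
    rw [← hconsE] at h1
    by_cases hpj : f j < s'
    · rw [Multiset.filter_cons_of_pos _ (by simpa [hp] using hpj), Multiset.card_cons,
        hcardE] at h1
      rw [if_pos hpj]; omega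
    · rw [Multiset.filter_cons_of_neg _ (by simpa [hp] using hpj), hcardE] at h1
      rw [if_neg hpj]; omega
  -- Fact 1 : f o' < s'
  have fact1 : f o' < s' := by
    by_contra hcon
    push_neg at hcon
    have hsub : Φ ⊆ Finset.range o' := by
      intro k hk
      rw [hΦ, Finset.mem_filter] at hk
      rw [Finset.mem_range]
      by_contra hko
      push_neg at hko
      have : f o' ≤ f k := hsf.monotone hko
      linarith [hk.2]
    have hcle : Φ.card ≤ o' := by
      have := Finset.card_le_card hsub
      simpa using this
    have hite0 : ¬ (f j < s') := by
      by_contra hpj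
      rw [hΦcard, if_pos hpj] at hcle; omega
    have hΦeq : Φ = Finset.range o' := by
      apply Finset.eq_of_subset_of_card_le hsub
      rw [hΦcard, if_neg hite0]; simp
    have hjΦ : j ∈ Φ := by
      rw [hΦeq, Finset.mem_range]; exact ho1
    rw [hΦ, Finset.mem_filter] at hjΦ
    exact hite0 hjΦ.2
  -- Fact 2 : s' < f (o'+1)
  have hsub2 : Finset.range (o' + 1) ⊆ Φ := by
    intro k hk
    rw [Finset.mem_range] at hk
    rw [hΦ, Finset.mem_filter, Finset.mem_range]
    refine ⟨by omega, ?_⟩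
    have : f k ≤ f o' := hsf.monotone (by omega)
    linarith
  have hΦeq2 : Finset.range (o' + 1) = Φ := by
    apply Finset.eq_of_subset_of_card_le hsub2
    rw [hΦcard]
    simp only [Finset.card_range]
    split_ifs <;> omega
  have fact2 : s' < f (o' + 1) := by
    have hnin : (o' + 1) ∉ Φ := by
      rw [← hΦeq2, Finset.mem_range]; omega
    rw [hΦ, Finset.mem_filter, Finset.mem_range] at hnin
    push_neg at hnin
    have hle : s' ≤ f (o' + 1) := hnin ho'1P
    have hne : s' ≠ f (o' + 1) := hs' (o' + 1) ho'1P (by omega)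
    exact lt_of_le_of_ne hle hne
  -- Fact 3 : sd (o' - 1) = f o'
  have fact3 : sd (o' - 1) = f o' := by
    have ho'pos : 1 ≤ o' := by omega
    have hlt : sd (o' - 1) < s' := by
      have := hmono (o' - 1) o' (by omega) ho'P
      rwa [hso'] at this
    have hmem : sd (o' - 1) ∈ Multiset.map sd (Finset.range P).val :=
      Multiset.mem_map.2 ⟨o' - 1, by simp; omega, rfl⟩
    rw [hmult] at hmem
    rcases Multiset.mem_cons.1 hmem with h | h
    · exfalso; rw [h] at hlt; exact lt_irrefl _ hlt
    · have hmem2 : sd (o' - 1) ∈ Multiset.map f (Finset.range P).val :=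
        Multiset.mem_of_mem_erase h
      rcases Multiset.mem_map.1 hmem2 with ⟨k, hkP, hke⟩
      have hkP' : k < P := by simpa using hkP
      -- k ∈ Φ so k ≤ o'
      have hkΦ : k ∈ Φ := by
        rw [hΦ, Finset.mem_filter, Finset.mem_range]
        exact ⟨hkP', by rw [hke]; exact hlt⟩
      rw [← hΦeq2, Finset.mem_range] at hkΦ
      have hub : sd (o' - 1) ≤ f o' := by
        rw [← hke]; exact hsf.monotone (by omega)
      -- converse : f o' ≤ sd (o'-1)
      have hfo'mem : f o' ∈ E := by
        rw [hE]
        rw [Multiset.mem_erase_of_ne (fun hcon => (by omega : o' ≠ j) (hsf.injective hcon))]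
        exact Multiset.mem_map.2 ⟨o', by simpa using ho'P, rfl⟩
      have hfo'M : f o' ∈ Multiset.map sd (Finset.range P).val := by
        rw [hmult]; exact Multiset.mem_cons_of_mem hfo'mem
      rcases Multiset.mem_map.1 hfo'M with ⟨i, hiP, hie⟩
      have hiP' : i < P := by simpa using hiP
      have hio : i < o' := by
        by_contra hcon
        push_neg at hcon
        rcases eq_or_lt_of_le hcon with h' | h'
        · rw [← h', hso'] at hie; linarith [fact1]
        · have := hmono o' i h' hiP'
          rw [hso', hie] at this
          linarith [fact1]
      have hlb : f o' ≤ sd (o' - 1) := by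
        rw [← hie]
        rcases eq_or_lt_of_le (by omega : i ≤ o' - 1) with h' | h'
        · rw [h']
        · exact le_of_lt (hmono i (o' - 1) h' (by omega))
      linarith
  -- Fact 4 : tminus ≤ sd 0
  have hse0 : f 0 = tminus P m μ β γ := by
    have hbg : 0 < β + γ := by linarith
    have hP1 : (1:ℝ) ≤ (P:ℝ) - 1 := by
      have : (2:ℝ) ≤ (P:ℝ) := by exact_mod_cast hP
      linarith
    have hX0 : 0 ≤ γ * ((P : ℝ) - 1) / (β + γ) :=
      div_nonneg (mul_nonneg hγ.le (by linarith)) hbg.le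
    have : (0:ℤ) ≤ ⌊γ * ((P : ℝ) - 1) / (β + γ)⌋ := Int.floor_nonneg.2 hX0
    rw [hfdef]
    simp only [se]
    rw [if_pos (by exact_mod_cast this)]
    simp
  have fact4 : tminus P m μ β γ ≤ sd 0 := by
    have hmem : sd 0 ∈ Multiset.map sd (Finset.range P).val :=
      Multiset.mem_map.2 ⟨0, by simp; omega, rfl⟩
    rw [hmult] at hmem
    rcases Multiset.mem_cons.1 hmem with h | h
    · rw [h, ← hse0]
      have : f 0 ≤ f o' := hsf.monotone (by omega)
      linarith [fact1]
    · rcases Multiset.mem_map.1 (Multiset.mem_of_mem_erase h) with ⟨k, _, hke⟩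
      rw [← hke, ← hse0]
      exact hsf.monotone (by omega)
  -- Assembly
  have harr : tminus P m μ β γ + (m/μ) * (o':ℝ) ≤ arr m μ sd o' := by
    have h1 := arr_lb (m := m) (μ := μ) hm hμ sd o'
    linarith
  have hgm := g_mono (β := β) (γ := γ) hβ hβ1 hγ harr
  have hid := se_cost_id (P := P) hP hm hμ hβ hβ1 hγ o'
  have hcost : rho P m μ β γ + (sd (o' - 1) - s') ≤ cost β γ m μ sd o' := by
    rw [cost, hso', fact3]
    rw [← hfdef] at hid
    linarith
  refine ⟨hcost, by linarith, ?_⟩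
  have hgap := se_gap (P := P) (m := m) (μ := μ) hP hm hμ hβ hβ1 hγ o'
  rw [← hfdef] at hgap
  rw [fact3]
  linarith [fact2]
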